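/- For Bell diagonal states ρ = ¼(1⊗1 + Σ E_l σ_l⊗σ_l) with E_1² ≥ E_2² ≥ E_3², the normalized geometric discord satisfies D²_{a|b} = ½(E_2² + E_3²); in particular for Werner states (all |E_i| = q), D_{a|b} = q. -/

import Mathlib

open Matrix Kronecker Complex
open scoped ComplexOrder

noncomputable section

/-- The Pauli matrices `σ₁, σ₂, σ₃`. -/
def pauli : Fin 3 → Matrix (Fin 2) (Fin 2) ℂ
  | 0 => !![0, 1; 1, 0]
  | 1 => !![0, -I; I, 0]
  | 2 => !![1, 0; 0, -1]

/-- The projector `|k⟩⟨k|` on Bob's qubit. -/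
def ketbra (k : Fin 2) : Matrix (Fin 2) (Fin 2) ℂ :=
  Matrix.of fun i j => if i = k ∧ j = k then 1 else 0

/-- The set of values `Tr (ρ − σ)²` over zero-discord states
`σ = Σ_k p_k ρ_k ⊗ |k⟩⟨k|` (with `ρ_k` density matrices on Alice's side, in Bob's
eigenbasis `|k⟩`, allowing an arbitrary local basis rotation `U` on Bob). -/
def discordDistances (ρ : Matrix (Fin 2 × Fin 2) (Fin 2 × Fin 2) ℂ) : Set ℝ :=
  {d : ℝ | ∃ (p : Fin 2 → ℝ) (ρs : Fin 2 → Matrix (Fin 2) (Fin 2) ℂ)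
      (U : Matrix (Fin 2) (Fin 2) ℂ), U ∈ Matrix.unitaryGroup (Fin 2) ℂ ∧
      (∀ k, 0 ≤ p k) ∧ (∑ k, p k) = 1 ∧
      (∀ k, (ρs k).PosSemidef ∧ (ρs k).trace = 1) ∧
      d = (((ρ - ∑ k, (p k : ℂ) •
        (ρs k ⊗ₖ (U * ketbra k * star U))) ^ 2).trace).re}

lemma ketbra_sum : ketbra 0 + ketbra 1 = 1 := by
  ext i j; fin_cases i <;> fin_cases j <;> simp [ketbra, Matrix.one_apply]

lemma ketbra_herm (k : Fin 2) : (ketbra k)ᴴ = ketbra k := by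
  ext i j; fin_cases k <;> fin_cases i <;> fin_cases j <;>
    simp [ketbra, Matrix.conjTranspose_apply]

lemma ketbra_mul (k : Fin 2) : ketbra k * ketbra k = ketbra k := by
  ext i j; fin_cases k <;> fin_cases i <;> fin_cases j <;>
    simp [ketbra, Matrix.mul_apply, Fin.sum_univ_two]

lemma ketbra_trace (k : Fin 2) : (ketbra k).trace = 1 := by
  fin_cases k <;> simp [ketbra, Matrix.trace, Fin.sum_univ_two]

lemma proj_facts (U : Matrix (Fin 2) (Fin 2) ℂ) (hU : U ∈ Matrix.unitaryGroup (Fin 2) ℂ) :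
    (U * ketbra 0 * star U)ᴴ = U * ketbra 0 * star U ∧
    (U * ketbra 0 * star U).trace = 1 ∧
    (U * ketbra 0 * star U) * (U * ketbra 0 * star U) = U * ketbra 0 * star U ∧
    U * ketbra 1 * star U = 1 - U * ketbra 0 * star U := by
  have h1 : star U * U = 1 := hU.1
  have h2 : U * star U = 1 := hU.2
  refine ⟨?_, ?_, ?_, ?_⟩
  · simp only [Matrix.conjTranspose_mul, Matrix.star_eq_conjTranspose]
    rw [Matrix.conjTranspose_conjTranspose, ketbra_herm, Matrix.mul_assoc]
  · rw [Matrix.trace_mul_cycle]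
    show ((star U * U) * ketbra 0).trace = 1
    rw [h1, Matrix.one_mul, ketbra_trace]
  · calc U * ketbra 0 * star U * (U * ketbra 0 * star U)
        = U * ketbra 0 * (star U * U) * ketbra 0 * star U := by
          simp only [Matrix.mul_assoc]
      _ = U * ketbra 0 * star U := by
          rw [h1, Matrix.mul_one, Matrix.mul_assoc U]
          rw [ketbra_mul]
  · have : U * (ketbra 0 + ketbra 1) * star U = 1 := by rw [ketbra_sum, Matrix.mul_one, h2]
    rw [Matrix.mul_add, Matrix.add_mul] at this
    linear_combination (norm := abel) this

lemma herm_param (A : Matrix (Fin 2) (Fin 2) ℂ) (hA : Aᴴ = A) (ht : A.trace = 1) :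
    ∃ x u v : ℝ, A = !![(x:ℂ), u + v*I; u - v*I, 1 - x] := by
  refine ⟨(A 0 0).re, (A 0 1).re, (A 0 1).im, ?_⟩
  have h00 : star (A 0 0) = A 0 0 := by
    have := congr_fun (congr_fun hA 0) 0
    simpa [Matrix.conjTranspose_apply] using this
  have h10 : star (A 0 1) = A 1 0 := by
    have := congr_fun (congr_fun hA 1) 0
    simpa [Matrix.conjTranspose_apply] using this
  have htr : A 0 0 + A 1 1 = 1 := by simpa [Matrix.trace, Fin.sum_univ_two] using ht
  have h00' : (A 0 0).im = 0 := by
    have := congrArg Complex.im h00; simp at this; linarith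
  have h11 : A 1 1 = 1 - A 0 0 := by linear_combination htr
  ext i j
  fin_cases i <;> fin_cases j <;> simp [Complex.ext_iff, h00']
  · rw [← h10]; simp
  · rw [h11]; simp [Complex.ext_iff, h00']

lemma psd_two (a b : ℝ) (hab : |b| ≤ a) :
    Matrix.PosSemidef (!![(a:ℂ), b; b, a]) := by
  obtain ⟨hb1, hb2⟩ := abs_le.1 hab
  rw [Matrix.posSemidef_iff_dotProduct_mulVec]
  constructor
  · ext i j; fin_cases i <;> fin_cases j <;> simp [Matrix.conjTranspose_apply]
  · intro x
    have key : star x ⬝ᵥ (!![(a:ℂ), b; b, a]).mulVec x =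
        ((a * ((x 0).re^2 + (x 0).im^2 + (x 1).re^2 + (x 1).im^2)
          + 2*b*((x 0).re*(x 1).re + (x 0).im*(x 1).im) : ℝ) : ℂ) := by
      simp [dotProduct, Matrix.mulVec, Fin.sum_univ_two, Complex.ext_iff,
        Complex.mul_re, Complex.mul_im, ← Complex.ofReal_pow]
      constructor <;> ring
    rw [key]
    rw [Complex.le_def]
    constructor
    · simp only [Complex.zero_re, Complex.ofReal_re]
      nlinarith [mul_nonneg (by linarith : (0:ℝ) ≤ a + b)
          (by positivity : (0:ℝ) ≤ ((x 0).re + (x 1).re)^2 + ((x 0).im + (x 1).im)^2),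
        mul_nonneg (by linarith : (0:ℝ) ≤ a - b)
          (by positivity : (0:ℝ) ≤ ((x 0).re - (x 1).re)^2 + ((x 0).im - (x 1).im)^2)]
    · simp [← Complex.ofReal_pow]

set_option maxHeartbeats 1000000 in
lemma trace_id (E : Fin 3 → ℝ) (p0 p1 x0 u0 v0 x1 u1 v1 y g h : ℝ)
    (hp : p0 + p1 = 1) (hw : y - y^2 - g^2 - h^2 = 0) :
    ((((1/4 : ℂ) • ((1 : Matrix (Fin 2 × Fin 2) (Fin 2 × Fin 2) ℂ)
        + ∑ l, (E l : ℂ) • (pauli l ⊗ₖ pauli l))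
      - ((p0 : ℂ) • ((!![(x0:ℂ), u0+v0*I; u0-v0*I, 1-x0]) ⊗ₖ (!![(y:ℂ), g+h*I; g-h*I, 1-y]))
        + (p1 : ℂ) • ((!![(x1:ℂ), u1+v1*I; u1-v1*I, 1-x1]) ⊗ₖ
            ((1 : Matrix (Fin 2) (Fin 2) ℂ) - !![(y:ℂ), g+h*I; g-h*I, 1-y])))) ^ 2).trace).re
    = (E 0^2 + E 1^2 + E 2^2)/4 - 1/4 + (p0^2+p1^2)/2
      + (p0^2*(4*u0^2+4*v0^2+(2*x0-1)^2) + p1^2*(4*u1^2+4*v1^2+(2*x1-1)^2))/2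
      - (E 0*(2*g)*(p0*(2*u0) - p1*(2*u1)) + E 1*(-2*h)*(p0*(-2*v0) - p1*(-2*v1))
         + E 2*(2*y-1)*(p0*(2*x0-1) - p1*(2*x1-1)))/2 := by
  have expand : ∀ A : Matrix (Fin 2 × Fin 2) (Fin 2 × Fin 2) ℂ,
      (A ^ 2).trace = ∑ i : Fin 2 × Fin 2, ∑ j : Fin 2 × Fin 2, A i j * A j i := by
    intro A
    simp [Matrix.trace, pow_two, Matrix.mul_apply, Matrix.diag]
  rw [expand]
  simp only [Fintype.sum_prod_type, Fin.sum_univ_two, Fin.sum_univ_three,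
    Matrix.sub_apply, Matrix.add_apply, Matrix.smul_apply, Matrix.one_apply,
    Matrix.kroneckerMap_apply, pauli, Matrix.cons_val', Matrix.cons_val_zero,
    Matrix.cons_val_one, Matrix.head_cons, Matrix.head_fin_const, Matrix.empty_val',
    Matrix.cons_val_fin_one, smul_eq_mul, Prod.mk.injEq]
  norm_num [Complex.ext_iff, Complex.add_re, Complex.add_im, Complex.mul_re, Complex.mul_im]
  ring_nf
  linear_combination (-1/2 : ℝ) * hp + (4*p0*p1*(x0*x1 + (1-x0)*(1-x1) + 2*(u0*u1 + v0*v1)) - 2*p0^2*(2*x0^2-2*x0+1+2*u0^2+2*v0^2) - 2*p1^2*(2*x1^2-2*x1+1+2*u1^2+2*v1^2)) * hw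

set_option maxHeartbeats 1000000 in
lemma ineq_step (E : Fin 3 → ℝ) (h01 : (E 1) ^ 2 ≤ (E 0) ^ 2) (h12 : (E 2) ^ 2 ≤ (E 1) ^ 2)
    (p0 p1 x0 u0 v0 x1 u1 v1 y g h : ℝ) (hp : p0 + p1 = 1)
    (hw : y - y^2 - g^2 - h^2 = 0) :
    ((E 1)^2 + (E 2)^2)/4 ≤
    (E 0^2 + E 1^2 + E 2^2)/4 - 1/4 + (p0^2+p1^2)/2
      + (p0^2*(4*u0^2+4*v0^2+(2*x0-1)^2) + p1^2*(4*u1^2+4*v1^2+(2*x1-1)^2))/2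
      - (E 0*(2*g)*(p0*(2*u0) - p1*(2*u1)) + E 1*(-2*h)*(p0*(-2*v0) - p1*(-2*v1))
         + E 2*(2*y-1)*(p0*(2*x0-1) - p1*(2*x1-1)))/2 := by
  have h02 : (E 2)^2 ≤ (E 0)^2 := h12.trans h01
  have hn : (2*g)^2 + (2*h)^2 + (2*y-1)^2 = 1 := by nlinarith [hw]
  have hE : (E 0)^2*(2*g)^2 + (E 0)^2*(2*h)^2 + (E 0)^2*(2*y-1)^2 = (E 0)^2 := by
    linear_combination (E 0)^2 * hn
  have s1 : 2*(E 0*(2*g)*(p0*(2*u0) - p1*(2*u1))) ≤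
      (E 0)^2*(2*g)^2 + (p0*(2*u0) - p1*(2*u1))^2 := by
    nlinarith [sq_nonneg (E 0*(2*g) - (p0*(2*u0) - p1*(2*u1)))]
  have s2 : 2*(E 1*(-2*h)*(p0*(-2*v0) - p1*(-2*v1))) ≤
      (E 0)^2*(2*h)^2 + (p0*(-2*v0) - p1*(-2*v1))^2 := by
    nlinarith [sq_nonneg (E 1*(-2*h) - (p0*(-2*v0) - p1*(-2*v1))),
      mul_nonneg (sub_nonneg.2 h01) (sq_nonneg (2*h))]
  have s3 : 2*(E 2*(2*y-1)*(p0*(2*x0-1) - p1*(2*x1-1))) ≤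
      (E 0)^2*(2*y-1)^2 + (p0*(2*x0-1) - p1*(2*x1-1))^2 := by
    nlinarith [sq_nonneg (E 2*(2*y-1) - (p0*(2*x0-1) - p1*(2*x1-1))),
      mul_nonneg (sub_nonneg.2 h02) (sq_nonneg (2*y-1))]
  have s4 : (p0*(2*u0) - p1*(2*u1))^2 ≤ 2*(p0^2*(2*u0)^2) + 2*(p1^2*(2*u1)^2) := by
    nlinarith [sq_nonneg (p0*(2*u0) + p1*(2*u1))]
  have s5 : (p0*(-2*v0) - p1*(-2*v1))^2 ≤ 2*(p0^2*(2*v0)^2) + 2*(p1^2*(2*v1)^2) := by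
    nlinarith [sq_nonneg (p0*(-2*v0) + p1*(-2*v1))]
  have s6 : (p0*(2*x0-1) - p1*(2*x1-1))^2 ≤ 2*(p0^2*(2*x0-1)^2) + 2*(p1^2*(2*x1-1)^2) := by
    nlinarith [sq_nonneg (p0*(2*x0-1) + p1*(2*x1-1))]
  have s7 : (1:ℝ)/4 ≤ (p0^2 + p1^2)/2 := by nlinarith [sq_nonneg (p0 - p1)]
  linarith [s1, s2, s3, s4, s5, s6, s7, hE]

lemma lower_bound (E : Fin 3 → ℝ) (h01 : (E 1) ^ 2 ≤ (E 0) ^ 2) (h12 : (E 2) ^ 2 ≤ (E 1) ^ 2)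
    (ρ : Matrix (Fin 2 × Fin 2) (Fin 2 × Fin 2) ℂ)
    (hρ : ρ = (1/4 : ℂ) •
      ((1 : Matrix (Fin 2 × Fin 2) (Fin 2 × Fin 2) ℂ)
        + ∑ l, (E l : ℂ) • (pauli l ⊗ₖ pauli l))) :
    ∀ d ∈ discordDistances ρ, ((E 1)^2 + (E 2)^2)/4 ≤ d := by
  rintro d ⟨p, ρs, U, hU, hp, hpsum, hρsd, rfl⟩
  obtain ⟨hPh, hPt, hPi, hP1⟩ := proj_facts U hU
  obtain ⟨y, g, h, hP⟩ := herm_param _ hPh hPt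
  obtain ⟨x0, u0, v0, h0⟩ := herm_param (ρs 0) (hρsd 0).1.1 (hρsd 0).2
  obtain ⟨x1, u1, v1, h1⟩ := herm_param (ρs 1) (hρsd 1).1.1 (hρsd 1).2
  have hpsum' : p 0 + p 1 = 1 := by simpa [Fin.sum_univ_two] using hpsum
  have hw : y - y^2 - g^2 - h^2 = 0 := by
    rw [hP] at hPi
    have h00 := congr_fun (congr_fun hPi 0) 0
    simp [Matrix.mul_apply, Fin.sum_univ_two, Complex.ext_iff, Complex.mul_re,
      Complex.mul_im] at h00
    nlinarith [h00.1]
  rw [hρ, Fin.sum_univ_two, hP1, hP, h0, h1]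
  rw [trace_id E (p 0) (p 1) x0 u0 v0 x1 u1 v1 y g h hpsum' hw]
  exact ineq_step E h01 h12 (p 0) (p 1) x0 u0 v0 x1 u1 v1 y g h hpsum' hw

lemma witness_mem (E : Fin 3 → ℝ) (hphys : ∀ l, |E l| ≤ 1)
    (ρ : Matrix (Fin 2 × Fin 2) (Fin 2 × Fin 2) ℂ)
    (hρ : ρ = (1/4 : ℂ) •
      ((1 : Matrix (Fin 2 × Fin 2) (Fin 2 × Fin 2) ℂ)
        + ∑ l, (E l : ℂ) • (pauli l ⊗ₖ pauli l))) :
    ((E 1)^2 + (E 2)^2)/4 ∈ discordDistances ρ := by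
  set c : ℝ := (Real.sqrt 2)⁻¹ with hc
  have hc2 : c^2 = 1/2 := by
    rw [hc, ← one_div, div_pow, one_pow, Real.sq_sqrt (by norm_num : (0:ℝ) ≤ 2)]
  have hcc : (c:ℂ) * c = 1/2 := by
    rw [← Complex.ofReal_mul, ← sq, hc2]; norm_num
  set U : Matrix (Fin 2) (Fin 2) ℂ := !![(c:ℂ), c; c, -c] with hUdef
  have hstar : star U = U := by
    rw [hUdef]; ext i j
    fin_cases i <;> fin_cases j <;>
      simp [Matrix.conjTranspose_apply, Complex.ext_iff]
  have h2c : (((Real.sqrt 2)⁻¹ : ℝ) : ℂ) ^ 2 * 2 = 1 := by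
    rw [← Complex.ofReal_pow]
    norm_cast
    rw [inv_pow, Real.sq_sqrt (by norm_num : (0:ℝ) ≤ 2)]
    norm_num
  have hk0 : ketbra 0 = !![1, 0; 0, 0] := by
    ext i j; fin_cases i <;> fin_cases j <;> simp [ketbra]
  have hUsq : U * U = 1 := by
    rw [hUdef]; ext i j
    fin_cases i <;> fin_cases j <;>
      simp [Matrix.mul_apply, Fin.sum_univ_two, Matrix.one_apply] <;>
      first
        | ring1
        | linear_combination (2:ℂ) * hcc
        | exact h2c
  have hU : U ∈ Matrix.unitaryGroup (Fin 2) ℂ := by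
    constructor <;> rw [hstar] <;> exact hUsq
  set M0 : Matrix (Fin 2) (Fin 2) ℂ :=
    !![(((1:ℝ)/2 :ℝ):ℂ), (E 0/2 : ℝ)+(0:ℝ)*I; (E 0/2:ℝ)-(0:ℝ)*I, 1-(((1:ℝ)/2:ℝ):ℂ)] with hM0
  set M1 : Matrix (Fin 2) (Fin 2) ℂ :=
    !![(((1:ℝ)/2 :ℝ):ℂ), (-(E 0)/2 : ℝ)+(0:ℝ)*I; (-(E 0)/2:ℝ)-(0:ℝ)*I, 1-(((1:ℝ)/2:ℝ):ℂ)] with hM1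
  have habs : |E 0 / 2| ≤ 1/2 := by
    have := hphys 0
    rw [abs_div, show |(2:ℝ)| = 2 by norm_num]
    linarith
  have hM0psd : M0.PosSemidef := by
    have : M0 = !![(((1:ℝ)/2 :ℝ):ℂ), ((E 0/2 : ℝ):ℂ); ((E 0/2:ℝ):ℂ), (((1:ℝ)/2:ℝ):ℂ)] := by
      rw [hM0]; ext i j; fin_cases i <;> fin_cases j <;> simp <;> norm_num
    rw [this]; exact psd_two (1/2) (E 0/2) habs
  have hM1psd : M1.PosSemidef := by
    have : M1 = !![(((1:ℝ)/2 :ℝ):ℂ), ((-(E 0)/2 : ℝ):ℂ); ((-(E 0)/2:ℝ):ℂ), (((1:ℝ)/2:ℝ):ℂ)] := by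
      rw [hM1]; ext i j; fin_cases i <;> fin_cases j <;> simp <;> norm_num
    rw [this]
    refine psd_two (1/2) (-(E 0)/2) ?_
    rw [show -(E 0)/2 = -(E 0/2) by ring, abs_neg]; exact habs
  have hM0tr : M0.trace = 1 := by
    rw [hM0]; simp [Matrix.trace, Fin.sum_univ_two]
  have hM1tr : M1.trace = 1 := by
    rw [hM1]; simp [Matrix.trace, Fin.sum_univ_two]
  have hproj : U * ketbra 0 * star U =
      !![(((1:ℝ)/2:ℝ):ℂ), ((1:ℝ)/2:ℝ)+(0:ℝ)*I; ((1:ℝ)/2:ℝ)-(0:ℝ)*I, 1-(((1:ℝ)/2:ℝ):ℂ)] := by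
    rw [hstar, hUdef, hk0]; ext i j
    fin_cases i <;> fin_cases j <;>
      simp [Matrix.mul_apply, Fin.sum_univ_two] <;> push_cast <;>
      linear_combination hcc
  have hproj1 : U * ketbra 1 * star U = 1 - U * ketbra 0 * star U :=
    (proj_facts U hU).2.2.2
  refine ⟨![1/2, 1/2], ![M0, M1], U, hU, ?_, ?_, ?_, ?_⟩
  · intro k; fin_cases k <;> norm_num
  · norm_num [Fin.sum_univ_two]
  · intro k; fin_cases k
    · exact ⟨hM0psd, hM0tr⟩
    · exact ⟨hM1psd, hM1tr⟩
  · rw [hρ, Fin.sum_univ_two]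
    simp only [Matrix.cons_val_zero, Matrix.cons_val_one, Matrix.head_cons]
    rw [hproj1, hproj, hM0, hM1]
    rw [trace_id E (1/2) (1/2) (1/2) (E 0/2) 0 (1/2) (-(E 0)/2) 0 (1/2) (1/2) 0
      (by norm_num) (by norm_num)]
    ring

/-- For Bell diagonal states `ρ = ¼(1⊗1 + Σ_l E_l σ_l⊗σ_l)` with
`E₁² ≥ E₂² ≥ E₃²`, the normalized geometric discord
`D²_{a|b}(ρ) = 2·min_σ Tr(ρ−σ)²` (minimum over zero-discord states `σ`) equals
`½(E₂² + E₃²)`; in particular for Werner states (all `|E_l| = q` with `q ≥ 0`),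
`D_{a|b} = q`. -/
theorem stmt_17 (E : Fin 3 → ℝ) (h01 : (E 1) ^ 2 ≤ (E 0) ^ 2) (h12 : (E 2) ^ 2 ≤ (E 1) ^ 2)
    (hphys : ∀ l, |E l| ≤ 1)
    (ρ : Matrix (Fin 2 × Fin 2) (Fin 2 × Fin 2) ℂ)
    (hρ : ρ = (1/4 : ℂ) •
      ((1 : Matrix (Fin 2 × Fin 2) (Fin 2 × Fin 2) ℂ)
        + ∑ l, (E l : ℂ) • (pauli l ⊗ₖ pauli l))) :
    2 * sInf (discordDistances ρ) = ((E 1) ^ 2 + (E 2) ^ 2) / 2 ∧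
    ∀ q : ℝ, 0 ≤ q → (∀ l, |E l| = q) →
      Real.sqrt (2 * sInf (discordDistances ρ)) = q := by
  have hmem := witness_mem E hphys ρ hρ
  have hlb := lower_bound E h01 h12 ρ hρ
  have hsInf : sInf (discordDistances ρ) = ((E 1)^2 + (E 2)^2)/4 :=
    le_antisymm (csInf_le ⟨_, fun d hd => hlb d hd⟩ hmem) (le_csInf ⟨_, hmem⟩ hlb)
  constructor
  · rw [hsInf]; ring
  · intro q hq habs
    have h1 : (E 1)^2 = q^2 := by rw [← habs 1, _root_.sq_abs]
    have h2 : (E 2)^2 = q^2 := by rw [← habs 2, _root_.sq_abs]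
    rw [hsInf, h1, h2, show 2*((q^2+q^2)/4) = q^2 by ring, Real.sqrt_sq hq]

end
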